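/- Let A be a finite-dimensional commutative ℂ-algebra and V an s-dimensional ℂ-vector space with basis e₁, …, e_s. Let θ, ϑ ∈ Z²(A, V) be written θ(x, y) = Σᵢ θᵢ(x, y) eᵢ and ϑ(x, y) = Σᵢ ϑᵢ(x, y) eᵢ with θᵢ, ϑᵢ ∈ Z²(A, ℂ). Assume Ann(θ) ∩ Ann(A) = 0 and Ann(ϑ) ∩ Ann(A) = 0, and that the classes [θ₁], …, [θ_s] are linearly independent in H²(A, ℂ) and likewise [ϑ₁], …, [ϑ_s]. Then the central extensions A_θ and A_ϑ are isomorphic as ℂ-algebras if and only if there exists an algebra automorphism φ of A such that the subspaces of H²(A, ℂ) spanned by [θ₁ ∘ (φ × φ)], …, [θ_s ∘ (φ × φ)] and by [ϑ₁], …, [ϑ_s] coincide. -/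
import Mathlib

lemma aux_sum {s : ℕ} (L : (Fin s → ℂ) →ₗ[ℂ] (Fin s → ℂ)) (v : Fin s → ℂ) (i : Fin s) :
    L v i = ∑ j, v j * L (fun k => if j = k then 1 else 0) i := by
  rw [LinearMap.pi_apply_eq_sum_univ L v]
  simp [Finset.sum_apply]

/-- Isomorphism criterion for central extensions (Lemma on `Aut(A)`-orbits): with
`θ = Σ θᵢ eᵢ`, `ϑ = Σ ϑᵢ eᵢ` symmetric cocycles with `Ann(θ) ∩ Ann(A) = 0`,
`Ann(ϑ) ∩ Ann(A) = 0` and the classes `[θᵢ]` (resp. `[ϑᵢ]`) linearly independent in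
`H²(A,ℂ)`, the central extensions `A_θ` and `A_ϑ` are isomorphic iff there is an algebra
automorphism `e` of `A` such that the subspaces of `H²(A,ℂ)` spanned by the classes
`[θᵢ ∘ (e × e)]` and by the classes `[ϑᵢ]` coincide (each family lies in the span of the
other modulo coboundaries `B²(A,ℂ)`). -/
theorem stmt4 (A : Type*) [NonUnitalNonAssocCommRing A] [Module ℂ A]
    [SMulCommClass ℂ A A] [IsScalarTower ℂ A A] [FiniteDimensional ℂ A]
    (s : ℕ)
    (θ ϑ : Fin s → (A →ₗ[ℂ] A →ₗ[ℂ] ℂ))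
    (hθsymm : ∀ i x y, θ i x y = θ i y x)
    (hϑsymm : ∀ i x y, ϑ i x y = ϑ i y x)
    (hθann : ∀ x : A, (∀ i y, θ i x y = 0) → (∀ y, x * y = 0) → x = 0)
    (hϑann : ∀ x : A, (∀ i y, ϑ i x y = 0) → (∀ y, x * y = 0) → x = 0)
    (hθind : ∀ c : Fin s → ℂ,
      (∃ f : A →ₗ[ℂ] ℂ, ∀ x y : A, (∑ i, c i * θ i x y) = f (x * y)) → c = 0)
    (hϑind : ∀ c : Fin s → ℂ,
      (∃ f : A →ₗ[ℂ] ℂ, ∀ x y : A, (∑ i, c i * ϑ i x y) = f (x * y)) → c = 0) :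
    (∃ E : (A × (Fin s → ℂ)) ≃ₗ[ℂ] (A × (Fin s → ℂ)),
       ∀ p q : A × (Fin s → ℂ),
         E (p.1 * q.1, fun i => θ i p.1 q.1)
           = ((E p).1 * (E q).1, fun i => ϑ i (E p).1 (E q).1)) ↔
    (∃ e : A ≃ₗ[ℂ] A, (∀ x y : A, e (x * y) = e x * e y) ∧
      (∀ i, ∃ (c : Fin s → ℂ) (f : A →ₗ[ℂ] ℂ),
        ∀ x y : A, θ i (e x) (e y) = (∑ j, c j * ϑ j x y) + f (x * y)) ∧
      (∀ j, ∃ (c : Fin s → ℂ) (f : A →ₗ[ℂ] ℂ),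
        ∀ x y : A, ϑ j x y = (∑ i, c i * θ i (e x) (e y)) + f (x * y))) := by
  constructor
  · rintro ⟨E, hE⟩
    have hsplit : ∀ (a : A) (v : Fin s → ℂ),
        ((a, v) : A × (Fin s → ℂ)) = (a, 0) + (0, v) := by intro a v; simp
    -- E maps (0,u) into {0} × V
    have key : ∀ (u : Fin s → ℂ) (y : A),
        (E (0, u)).1 * y = 0 ∧ ∀ i, ϑ i (E (0, u)).1 y = 0 := by
      intro u y
      have h := hE (0, u) (E.symm (y, 0))
      simp only [zero_mul, map_zero, LinearMap.zero_apply,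
        LinearEquiv.apply_symm_apply] at h
      have h0 : ((0 : A), (fun _ => (0:ℂ) : Fin s → ℂ)) = (0 : A × (Fin s → ℂ)) := rfl
      rw [h0, map_zero] at h
      have h1 := congrArg Prod.fst h
      have h2 := congrArg Prod.snd h
      refine ⟨h1.symm, fun i => ?_⟩
      exact (congrFun h2 i).symm
    have hker : ∀ u : Fin s → ℂ, (E (0, u)).1 = 0 :=
      fun u => hϑann _ (fun i y => (key u y).2 i) (fun y => (key u y).1)
    -- E.symm is multiplicative
    have hE' : ∀ p q : A × (Fin s → ℂ),
        E.symm (p.1 * q.1, fun i => ϑ i p.1 q.1)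
          = ((E.symm p).1 * (E.symm q).1, fun i => θ i (E.symm p).1 (E.symm q).1) := by
      intro p q
      apply E.injective
      rw [LinearEquiv.apply_symm_apply, hE (E.symm p) (E.symm q)]
      simp
    have key' : ∀ (u : Fin s → ℂ) (y : A),
        (E.symm (0, u)).1 * y = 0 ∧ ∀ i, θ i (E.symm (0, u)).1 y = 0 := by
      intro u y
      have h := hE' (0, u) (E (y, 0))
      simp only [zero_mul, map_zero, LinearMap.zero_apply,
        LinearEquiv.symm_apply_apply] at h
      have h0 : ((0 : A), (fun _ => (0:ℂ) : Fin s → ℂ)) = (0 : A × (Fin s → ℂ)) := rfl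
      rw [h0, map_zero] at h
      have h1 := congrArg Prod.fst h
      have h2 := congrArg Prod.snd h
      refine ⟨h1.symm, fun i => ?_⟩
      exact (congrFun h2 i).symm
    have hker' : ∀ u : Fin s → ℂ, (E.symm (0, u)).1 = 0 :=
      fun u => hθann _ (fun i y => (key' u y).2 i) (fun y => (key' u y).1)
    -- the maps
    set eL : A →ₗ[ℂ] A :=
      (LinearMap.fst ℂ A (Fin s → ℂ)).comp (E.toLinearMap.comp (LinearMap.inl ℂ A (Fin s → ℂ))) with heLdef
    set eL' : A →ₗ[ℂ] A :=
      (LinearMap.fst ℂ A (Fin s → ℂ)).comp (E.symm.toLinearMap.comp (LinearMap.inl ℂ A (Fin s → ℂ))) with heL'def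
    have heL : ∀ x, eL x = (E (x, 0)).1 := fun x => rfl
    have heL' : ∀ x, eL' x = (E.symm (x, 0)).1 := fun x => rfl
    have hLR : ∀ x : A, eL' (eL x) = x := by
      intro x
      have h1 : E (x, (0 : Fin s → ℂ)) = ((E (x, 0)).1, 0) + (0, (E (x, 0)).2) := by
        rw [← hsplit]
      have h2 := congrArg (fun z => (E.symm z).1) h1
      simp only [LinearEquiv.symm_apply_apply, map_add, Prod.fst_add, hker', add_zero] at h2
      rw [heL' (eL x), heL x]
      exact h2.symm
    have hRL : ∀ x : A, eL (eL' x) = x := by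
      intro x
      have h1 : E.symm (x, (0 : Fin s → ℂ)) = ((E.symm (x, 0)).1, 0) + (0, (E.symm (x, 0)).2) := by
        rw [← hsplit]
      have h2 := congrArg (fun z => (E z).1) h1
      simp only [LinearEquiv.apply_symm_apply, map_add, Prod.fst_add, hker, add_zero] at h2
      rw [heL (eL' x), heL' x]
      exact h2.symm
    -- multiplicativity of eL'
    have hm : ∀ x y : A, eL' (x * y) = eL' x * eL' y := by
      intro x y
      have h := hE' (x, 0) (y, 0)
      rw [hsplit (x * y) (fun i => ϑ i x y), map_add] at h
      have h2 := congrArg Prod.fst h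
      simp only [Prod.fst_add, hker', add_zero] at h2
      rw [heL' (x * y)]
      exact h2
    refine ⟨LinearEquiv.ofLinear eL' eL
        (LinearMap.ext fun x => hLR x) (LinearMap.ext fun x => hRL x), ?_, ?_, ?_⟩
    · intro x y
      simpa only [LinearEquiv.ofLinear_apply] using hm x y
    · -- condition (i)
      intro i
      set ωm' : (Fin s → ℂ) →ₗ[ℂ] (Fin s → ℂ) :=
        (LinearMap.snd ℂ A (Fin s → ℂ)).comp
          (E.symm.toLinearMap.comp (LinearMap.inr ℂ A (Fin s → ℂ))) with hωm'
      set ψm' : A →ₗ[ℂ] (Fin s → ℂ) :=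
        (LinearMap.snd ℂ A (Fin s → ℂ)).comp
          (E.symm.toLinearMap.comp (LinearMap.inl ℂ A (Fin s → ℂ))) with hψm'
      refine ⟨fun j => ωm' (fun k => if j = k then 1 else 0) i,
        (LinearMap.proj i).comp ψm', ?_⟩
      intro x y
      have h := hE' (x, 0) (y, 0)
      rw [hsplit (x * y) (fun i => ϑ i x y), map_add] at h
      have h2 := congrFun (congrArg Prod.snd h) i
      simp only [Prod.snd_add, Pi.add_apply] at h2
      have h2' : ψm' (x * y) i + ωm' (fun j => ϑ j x y) i = θ i (eL' x) (eL' y) := h2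
      have hsum := aux_sum ωm' (fun j => ϑ j x y) i
      simp only [LinearEquiv.ofLinear_apply]
      rw [← h2', hsum, add_comm]
      refine congrArg₂ (· + ·) (Finset.sum_congr rfl fun j _ => mul_comm _ _) rfl
    · -- condition (ii)
      intro j
      set ωm : (Fin s → ℂ) →ₗ[ℂ] (Fin s → ℂ) :=
        (LinearMap.snd ℂ A (Fin s → ℂ)).comp
          (E.toLinearMap.comp (LinearMap.inr ℂ A (Fin s → ℂ))) with hωm
      set ψm : A →ₗ[ℂ] (Fin s → ℂ) :=
        (LinearMap.snd ℂ A (Fin s → ℂ)).comp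
          (E.toLinearMap.comp (LinearMap.inl ℂ A (Fin s → ℂ))) with hψm
      refine ⟨fun i => ωm (fun k => if i = k then 1 else 0) j,
        (LinearMap.proj j).comp (ψm.comp eL'), ?_⟩
      intro x y
      have h := hE (eL' x, 0) (eL' y, 0)
      rw [hsplit (eL' x * eL' y) (fun i => θ i (eL' x) (eL' y)), map_add] at h
      have hx : (E (eL' x, (0 : Fin s → ℂ))).1 = x := by rw [← heL (eL' x)]; exact hRL x
      have hy : (E (eL' y, (0 : Fin s → ℂ))).1 = y := by rw [← heL (eL' y)]; exact hRL y
      rw [hx, hy] at h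
      have h2 := congrFun (congrArg Prod.snd h) j
      simp only [Prod.snd_add, Pi.add_apply] at h2
      have h2' : ψm (eL' x * eL' y) j + ωm (fun i => θ i (eL' x) (eL' y)) j = ϑ j x y := h2
      have hsum := aux_sum ωm (fun i => θ i (eL' x) (eL' y)) j
      simp only [LinearEquiv.ofLinear_apply]
      rw [← h2', ← hm x y, hsum, add_comm]
      refine congrArg₂ (· + ·) (Finset.sum_congr rfl fun i _ => mul_comm _ _) rfl
  · rintro ⟨e, hmul, h1, h2⟩
    classical
    choose c f hcf using h1
    choose d g hdg using h2
    have hesymm_mul : ∀ x y : A, e.symm (x * y) = e.symm x * e.symm y := by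
      intro x y
      apply e.injective
      rw [e.apply_symm_apply, hmul, e.apply_symm_apply, e.apply_symm_apply]
    have hθk : ∀ k (x y : A), θ k x y
        = ∑ j, c k j * ϑ j (e.symm x) (e.symm y) + f k (e.symm (x * y)) := by
      intro k x y
      have h := hcf k (e.symm x) (e.symm y)
      rw [e.apply_symm_apply, e.apply_symm_apply] at h
      rw [h, hesymm_mul]
    have hϑj : ∀ j (x y : A), ϑ j (e.symm x) (e.symm y)
        = ∑ i, d j i * θ i x y + g j (e.symm (x * y)) := by
      intro j x y
      have h := hdg j (e.symm x) (e.symm y)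
      rw [e.apply_symm_apply, e.apply_symm_apply] at h
      rw [h, hesymm_mul]
    -- the coefficient matrices are mutually inverse
    have hCD : ∀ k i, (∑ j, c k j * d j i) = if k = i then 1 else 0 := by
      intro k i
      have h0 : (fun i => (if k = i then (1:ℂ) else 0) - ∑ j, c k j * d j i) = 0 := by
        apply hθind
        refine ⟨((∑ j, c k j • g j) + f k).comp e.symm.toLinearMap, ?_⟩
        intro x y
        have step1 : ∑ i, ((if k = i then (1:ℂ) else 0) - ∑ j, c k j * d j i) * θ i x y
            = θ k x y - ∑ i, (∑ j, c k j * d j i) * θ i x y := by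
          simp only [sub_mul]
          rw [Finset.sum_sub_distrib]
          congr 1
          simp [ite_mul]
        have step2 : ∑ i, (∑ j, c k j * d j i) * θ i x y
            = ∑ j, c k j * (∑ i, d j i * θ i x y) := by
          simp only [Finset.sum_mul, Finset.mul_sum]
          rw [Finset.sum_comm]
          simp only [mul_assoc]
        have step3 : ∀ j, (∑ i, d j i * θ i x y)
            = ϑ j (e.symm x) (e.symm y) - g j (e.symm (x * y)) := by
          intro j
          rw [hϑj j x y]; ring
        rw [step1, step2]
        simp only [step3]
        rw [hθk k x y]
        simp only [LinearMap.comp_apply, LinearEquiv.coe_coe, LinearMap.add_apply,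
          LinearMap.sum_apply, LinearMap.smul_apply, smul_eq_mul, mul_sub,
          Finset.sum_sub_distrib]
        ring
      have h0i := congrFun h0 i
      exact (sub_eq_zero.mp h0i).symm
    have hDC : ∀ j l, (∑ i, d j i * c i l) = if j = l then 1 else 0 := by
      intro j l
      have h0 : (fun l => (if j = l then (1:ℂ) else 0) - ∑ i, d j i * c i l) = 0 := by
        apply hϑind
        refine ⟨(∑ i, d j i • f i) + g j, ?_⟩
        intro x y
        have step1 : ∑ l, ((if j = l then (1:ℂ) else 0) - ∑ i, d j i * c i l) * ϑ l x y
            = ϑ j x y - ∑ l, (∑ i, d j i * c i l) * ϑ l x y := by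
          simp only [sub_mul]
          rw [Finset.sum_sub_distrib]
          congr 1
          simp [ite_mul]
        have step2 : ∑ l, (∑ i, d j i * c i l) * ϑ l x y
            = ∑ i, d j i * (∑ l, c i l * ϑ l x y) := by
          simp only [Finset.sum_mul, Finset.mul_sum]
          rw [Finset.sum_comm]
          simp only [mul_assoc]
        have step3 : ∀ i, (∑ l, c i l * ϑ l x y)
            = θ i (e x) (e y) - f i (x * y) := by
          intro i
          rw [hcf i x y]; ring
        rw [step1, step2]
        simp only [step3]
        rw [hdg j x y]
        simp only [LinearMap.add_apply, LinearMap.sum_apply, LinearMap.smul_apply,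
          smul_eq_mul, mul_sub, Finset.sum_sub_distrib]
        ring
      have h0l := congrFun h0 l
      exact (sub_eq_zero.mp h0l).symm
    -- the linear maps
    set Cm : (Fin s → ℂ) →ₗ[ℂ] (Fin s → ℂ) :=
      LinearMap.pi (fun k => ∑ j, c k j • LinearMap.proj j) with hCmdef
    set Dm : (Fin s → ℂ) →ₗ[ℂ] (Fin s → ℂ) :=
      LinearMap.pi (fun j => ∑ i, d j i • LinearMap.proj i) with hDmdef
    set Gm : A →ₗ[ℂ] (Fin s → ℂ) := LinearMap.pi g with hGmdef
    have hCm : ∀ (v : Fin s → ℂ) k, Cm v k = ∑ j, c k j * v j := by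
      intro v k
      simp [hCmdef, LinearMap.pi_apply, LinearMap.sum_apply, LinearMap.smul_apply,
        LinearMap.proj_apply, smul_eq_mul]
    have hDm : ∀ (v : Fin s → ℂ) j, Dm v j = ∑ i, d j i * v i := by
      intro v j
      simp [hDmdef, LinearMap.pi_apply, LinearMap.sum_apply, LinearMap.smul_apply,
        LinearMap.proj_apply, smul_eq_mul]
    have hGm : ∀ (a : A) j, Gm a j = g j a := fun a j => rfl
    have hswap : ∀ (M N : Fin s → Fin s → ℂ) (v : Fin s → ℂ) (k : Fin s),
        (∀ k i, (∑ j, M k j * N j i) = if k = i then 1 else 0) →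
        (∑ j, M k j * ∑ i, N j i * v i) = v k := by
      intro M N v k hMN
      calc ∑ j, M k j * ∑ i, N j i * v i
          = ∑ i, (∑ j, M k j * N j i) * v i := by
            simp only [Finset.mul_sum]
            rw [Finset.sum_comm]
            simp only [Finset.sum_mul, mul_assoc]
        _ = v k := by
            simp only [hMN, ite_mul, one_mul, zero_mul]
            simp
    have hCDm : ∀ v, Cm (Dm v) = v := by
      intro v; funext k
      rw [hCm]
      calc ∑ j, c k j * Dm v j = ∑ j, c k j * ∑ i, d j i * v i := by
            simp only [hDm]
        _ = v k := hswap c d v k hCD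
    have hDCm : ∀ v, Dm (Cm v) = v := by
      intro v; funext k
      rw [hDm]
      calc ∑ j, d k j * Cm v j = ∑ j, d k j * ∑ i, c j i * v i := by
            simp only [hCm]
        _ = v k := hswap d c v k hDC
    -- the equivalence
    set T : (A × (Fin s → ℂ)) →ₗ[ℂ] (A × (Fin s → ℂ)) :=
      (e.symm.toLinearMap.comp (LinearMap.fst ℂ A (Fin s → ℂ))).prod
        ((Dm.comp (LinearMap.snd ℂ A (Fin s → ℂ))) +
          (Gm.comp (e.symm.toLinearMap.comp (LinearMap.fst ℂ A (Fin s → ℂ))))) with hTdef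
    set S : (A × (Fin s → ℂ)) →ₗ[ℂ] (A × (Fin s → ℂ)) :=
      (e.toLinearMap.comp (LinearMap.fst ℂ A (Fin s → ℂ))).prod
        ((Cm.comp (LinearMap.snd ℂ A (Fin s → ℂ))) -
          (Cm.comp (Gm.comp (LinearMap.fst ℂ A (Fin s → ℂ))))) with hSdef
    have hT : ∀ p : A × (Fin s → ℂ), T p = (e.symm p.1, Dm p.2 + Gm (e.symm p.1)) := by
      intro p; rfl
    have hS : ∀ p : A × (Fin s → ℂ), S p = (e p.1, Cm p.2 - Cm (Gm p.1)) := by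
      intro p; rfl
    have hTS : T.comp S = LinearMap.id := by
      apply LinearMap.ext
      intro p
      rw [LinearMap.comp_apply, hS, hT, LinearMap.id_apply, Prod.ext_iff]
      constructor
      · simp
      · show Dm (Cm p.2 - Cm (Gm p.1)) + Gm (e.symm (e p.1)) = p.2
        simp only [LinearEquiv.symm_apply_apply, map_sub, hDCm]
        abel
    have hST : S.comp T = LinearMap.id := by
      apply LinearMap.ext
      intro p
      rw [LinearMap.comp_apply, hT, hS, LinearMap.id_apply, Prod.ext_iff]
      constructor
      · simp
      · show Cm (Dm p.2 + Gm (e.symm p.1)) - Cm (Gm (e.symm p.1)) = p.2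
        simp only [map_add, hCDm]
        abel
    refine ⟨LinearEquiv.ofLinear T S hTS hST, ?_⟩
    intro p q
    simp only [LinearEquiv.ofLinear_apply]
    rw [hT (p.1 * q.1, fun i => θ i p.1 q.1), hT p, hT q, Prod.ext_iff]
    constructor
    · show e.symm (p.1 * q.1) = (e.symm p.1, _).1 * (e.symm q.1, _).1
      exact hesymm_mul p.1 q.1
    · show Dm (fun i => θ i p.1 q.1) + Gm (e.symm (p.1 * q.1)) = _
      funext j
      simp only [Pi.add_apply]
      rw [hDm, hGm, hϑj j p.1 q.1, hesymm_mul]
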